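/- For i = 0,…,⌊n/2⌋, k, ℓ = 0,…,n and u ∈ U_i, the identity W̄_{k,ℓ} W_{ℓ,i} u = (−1)^i q^{binom(i,2)+k(ℓ−i)} [n−k−i choose ℓ−i]_q · W_{k,i} u holds, where binom(i,2) = i(i−1)/2. -/

import Mathlib

open Matrix

/-- The Gaussian binomial coefficient `[a choose b]_q`, as a real number:
`∏_{i=0}^{b-1} (q^(a-i)-1)/(q^(b-i)-1)` for `a, b ≥ 0`, and `0` if `a < 0` or `b < 0`. -/
noncomputable def gbinom (q : ℝ) (a b : ℤ) : ℝ :=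
  if 0 ≤ a ∧ 0 ≤ b then
    ∏ i ∈ Finset.range b.toNat, (q ^ (a - i) - 1) / (q ^ (b - i) - 1)
  else 0

/-- The matrix `W_{k,ℓ}` on `L(V) × L(V)`: `(W_{k,ℓ})_{x,y} = 1` if `dim x = k`, `dim y = ℓ`
and `dim (x ⊓ y) = min k ℓ`, and `0` otherwise.  (Indices in `ℤ`, so that `W_{-1,0} = 0`.) -/
noncomputable def Wmat (K V : Type*) [Field K] [AddCommGroup V] [Module K V] (k l : ℤ) :
    Matrix (Submodule K V) (Submodule K V) ℝ :=
  Matrix.of fun x y =>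
    if (Module.finrank K x : ℤ) = k ∧ (Module.finrank K y : ℤ) = l ∧
        (Module.finrank K ↥(x ⊓ y) : ℤ) = min k l then 1 else 0

open Classical in
/-- The matrix `W̄_{k,ℓ}`: `(W̄_{k,ℓ})_{x,y} = 1` if `dim x = k`, `dim y = ℓ` and `x ⊓ y = ⊥`,
and `0` otherwise. -/
noncomputable def Wbarmat (K V : Type*) [Field K] [AddCommGroup V] [Module K V] (k l : ℤ) :
    Matrix (Submodule K V) (Submodule K V) ℝ :=
  Matrix.of fun x y =>
    if (Module.finrank K x : ℤ) = k ∧ (Module.finrank K y : ℤ) = l ∧ x ⊓ y = ⊥ then 1 else 0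

/-- The subspace `U_i ⊆ ℝ^{L(V)}` of vectors supported on `L_i(V)` and killed by
`W_{i-1,i}`. -/
noncomputable def Usub (K V : Type*) [Field K] [AddCommGroup V] [Module K V]
    [Fintype (Submodule K V)] (i : ℕ) : Submodule ℝ (Submodule K V → ℝ) :=
  LinearMap.ker (Matrix.mulVecLin (Wmat K V ((i : ℤ) - 1) (i : ℤ))) ⊓
    ⨅ x ∈ {x : Submodule K V | Module.finrank K x ≠ i},
      LinearMap.ker (LinearMap.proj (R := ℝ) (φ := fun _ : Submodule K V => ℝ) x)


namespace GbAux

noncomputable def gnum (q : ℝ) (a : ℤ) (b : ℕ) : ℝ :=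
  ∏ j ∈ Finset.range b, (q ^ (a - j) - 1)

noncomputable def gden (q : ℝ) (b : ℕ) : ℝ :=
  ∏ j ∈ Finset.range b, (q ^ (j + 1) - 1)

variable {q : ℝ}

lemma gden_pos (hq : 1 < q) (b : ℕ) : 0 < gden q b := by
  refine Finset.prod_pos fun j _ => ?_
  have : (1:ℝ) < q ^ (j+1) := one_lt_pow₀ hq (by omega)
  linarith

lemma gnum_succ (a : ℤ) (b : ℕ) : gnum q a (b+1) = gnum q a b * (q ^ (a - b) - 1) :=
  Finset.prod_range_succ _ _

lemma gden_succ (b : ℕ) : gden q (b+1) = gden q b * (q ^ (b + 1) - 1) :=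
  Finset.prod_range_succ _ _

lemma gnum_shift (a : ℤ) (b : ℕ) :
    gnum q (a+1) (b+1) = (q ^ (a+1) - 1) * gnum q a b := by
  rw [gnum, Finset.prod_range_succ']
  simp only [Nat.cast_add, Nat.cast_one]
  rw [mul_comm]
  congr 1
  · congr 1; norm_num
  · refine Finset.prod_congr rfl fun j _ => ?_
    congr 1
    ring_nf

lemma gnum_self (b : ℕ) : gnum q (b : ℤ) b = gden q b := by
  rw [gnum, ← Finset.prod_range_reflect]
  refine Finset.prod_congr rfl fun j hj => ?_
  rw [Finset.mem_range] at hj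
  have h1 : (b : ℤ) - (b - 1 - j : ℕ) = ((j+1 : ℕ) : ℤ) := by
    push_cast [Nat.cast_sub (by omega : 1 + j ≤ b)]
    ring_nf
    omega
  rw [h1, zpow_natCast]

lemma gbinom_nat (a b : ℕ) :
    gbinom q a b = gnum q a b / gden q b := by
  rw [gbinom, if_pos ⟨Int.natCast_nonneg a, Int.natCast_nonneg b⟩, Int.toNat_natCast]
  rw [Finset.prod_div_distrib, gnum]
  congr 1
  exact gnum_self b

lemma gnum_eq_zero (a b : ℕ) (h : a < b) : gnum q (a : ℤ) b = 0 := by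
  refine Finset.prod_eq_zero (Finset.mem_range.mpr h) ?_
  rw [sub_self, zpow_zero, sub_self]

lemma gnum_pos (hq : 1 < q) (a : ℤ) (b : ℕ) (h : (b : ℤ) ≤ a) : 0 < gnum q a b := by
  refine Finset.prod_pos fun j hj => ?_
  rw [Finset.mem_range] at hj
  have h1 : (1:ℤ) ≤ a - j := by omega
  have : (1:ℝ) < q ^ (a - (j:ℤ)) := by
    calc (1:ℝ) < q := hq
    _ = q ^ (1:ℤ) := (zpow_one q).symm
    _ ≤ q ^ (a - (j:ℤ)) := zpow_le_zpow_right₀ (le_of_lt hq) h1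
  linarith

lemma gbinom_pos (hq : 1 < q) (a b : ℕ) (h : b ≤ a) : 0 < gbinom q a b := by
  rw [gbinom_nat]
  exact div_pos (gnum_pos hq _ _ (by exact_mod_cast h)) (gden_pos hq b)

lemma gbinom_eq_zero (hq : 1 < q) (a b : ℕ) (h : a < b) : gbinom q a b = 0 := by
  rw [gbinom_nat, gnum_eq_zero _ _ h, zero_div]

lemma gbinom_zero_right' (a : ℤ) (ha : 0 ≤ a) : gbinom q a 0 = 1 := by
  rw [gbinom, if_pos ⟨ha, le_refl (0:ℤ)⟩]; simp

lemma gbinom_zero_right (a : ℕ) : gbinom q (a : ℤ) 0 = 1 := by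
  rw [gbinom, if_pos ⟨Int.natCast_nonneg a, le_refl (0:ℤ)⟩]
  simp

lemma gbinom_diag (hq : 1 < q) (b : ℕ) : gbinom q b b = 1 := by
  rw [gbinom_nat, gnum_self, div_self (ne_of_gt (gden_pos hq b))]

lemma gbinom_pascal (hq : 1 < q) (t s : ℕ) :
    gbinom q (t+1 : ℕ) (s+1 : ℕ)
      = q ^ (s+1) * gbinom q t (s+1 : ℕ) + gbinom q t s := by
  have hq0 : q ≠ 0 := by positivity
  rw [gbinom_nat, gbinom_nat, gbinom_nat]
  have hshift : gnum q ((t:ℕ)+1 : ℕ) (s+1) = (q ^ ((t:ℤ)+1) - 1) * gnum q t s := by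
    have : (((t:ℕ)+1 : ℕ) : ℤ) = (t : ℤ) + 1 := by push_cast; ring
    rw [this, gnum_shift]
  have hsucc : gnum q t (s+1) = gnum q t s * (q ^ ((t:ℤ) - s) - 1) := gnum_succ _ _
  rw [hshift, hsucc, gden_succ]
  have hden : gden q s ≠ 0 := ne_of_gt (gden_pos hq s)
  have hden2 : (q ^ (s+1) - 1) ≠ 0 := by
    have : (1:ℝ) < q ^ (s+1) := one_lt_pow₀ hq (by omega)
    linarith
  have hz : q ^ ((t:ℤ) - s) * q ^ (s+1 : ℕ) = q ^ ((t:ℤ)+1) := by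
    rw [← zpow_natCast q (s+1), ← zpow_add₀ hq0]
    congr 1
    push_cast
    ring
  rw [show gnum q (t:ℤ) s / gden q s
      = gnum q (t:ℤ) s * (q^(s+1) - 1) / (gden q s * (q^(s+1) - 1)) from
      (mul_div_mul_right _ _ hden2).symm, ← mul_div_assoc, ← add_div]
  congr 1
  linear_combination (-(gnum q (t:ℤ) s)) * hz


-- new material
lemma gnum_hyper (m : ℕ) : gnum q ((m:ℤ)+1) m * (q - 1) = gden q (m+1) := by
  rw [gden, Finset.prod_range_succ']
  have h2 : (q:ℝ)^(0+1) - 1 = q - 1 := by norm_num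
  rw [h2]
  congr 1
  rw [gnum, ← Finset.prod_range_reflect]
  apply Finset.prod_congr rfl
  intro j hj
  rw [Finset.mem_range] at hj
  have h1 : (m:ℤ) + 1 - ((m-1-j:ℕ):ℤ) = ((j+2:ℕ):ℤ) := by omega
  rw [h1, zpow_natCast]

lemma gb_hyper (hq : 1 < q) (m : ℕ) :
    gbinom q (m+1 : ℕ) m * (q - 1) = q ^ (m+1) - 1 := by
  have h0 : ((m+1:ℕ) : ℤ) = (m:ℤ)+1 := by push_cast; ring
  rw [gbinom_nat, h0, div_mul_eq_mul_div, gnum_hyper, gden_succ,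
    mul_comm (gden q m) _, mul_div_assoc, div_self (ne_of_gt (gden_pos hq m)), mul_one]

lemma gb_step (hq : 1 < q) (A m : ℕ) :
    gbinom q A (m+1 : ℕ) * (gbinom q (m+1 : ℕ) m * (q-1)) * q^m
      = gbinom q A m * ((q:ℝ)^A - q^m) := by
  have hq0 : q ≠ 0 := by positivity
  rw [gb_hyper hq m, gbinom_nat, gbinom_nat, gnum_succ, gden_succ]
  have hden : gden q m ≠ 0 := ne_of_gt (gden_pos hq m)
  have hden2 : (q ^ (m+1) - 1) ≠ 0 := by
    have : (1:ℝ) < q ^ (m+1) := one_lt_pow₀ hq (by omega)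
    linarith
  have hzm : q ^ ((A:ℤ) - m) * q^m = q^A := by
    rw [← zpow_natCast q m, ← zpow_add₀ hq0, sub_add_cancel, zpow_natCast]
  field_simp
  ring_nf
  linear_combination (gnum q (A:ℤ) m) * hzm

lemma I1 (hq : 1 < q) (t : ℕ) :
    ∑ s ∈ Finset.range (t+1), (-1:ℝ)^s * q^(s.choose 2) * gbinom q t s
      = if t = 0 then 1 else 0 := by
  cases t with
  | zero => simp [gbinom_zero_right' 0 le_rfl]
  | succ t =>
    rw [Finset.sum_range_succ' _ (t+1)]
    have hf0 : (-1:ℝ)^0 * q^((0:ℕ).choose 2) * gbinom q ((t+1:ℕ) : ℤ) ((0:ℕ) : ℤ) = 1 := by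
      simp
      exact gbinom_zero_right' _ (by positivity)
    rw [hf0]
    set e : ℕ → ℝ := fun s => (-1:ℝ)^s * q^((s+1).choose 2) * gbinom q (t:ℤ) (s:ℤ) with he
    have hterm : ∀ s : ℕ, (-1:ℝ)^(s+1) * q^((s+1).choose 2) * gbinom q ((t+1:ℕ):ℤ) ((s+1:ℕ):ℤ)
        = e (s+1) - e s := by
      intro s
      rw [gbinom_pascal hq t s, he]
      simp only []
      have hch : (s+1+1).choose 2 = (s+1).choose 2 + (s+1) := by
        rw [Nat.choose_succ_succ (s+1) 1, Nat.choose_one_right, Nat.add_comm]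
      rw [hch, pow_add]
      ring
    rw [Finset.sum_congr rfl (fun s _ => hterm s), Finset.sum_range_sub e (t+1)]
    have he0 : e 0 = 1 := by
      rw [he]
      simp
      exact gbinom_zero_right' _ (by positivity)
    have het : e (t+1) = 0 := by
      rw [he]
      simp only []
      rw [gbinom_eq_zero hq t (t+1) (by omega)]
      ring
    rw [he0, het]
    simp

lemma I1partial (hq : 1 < q) (i t : ℕ) (h : t ≤ i) :
    ∑ s ∈ Finset.range i, (-1:ℝ)^s * q^(s.choose 2) * gbinom q t s
      = (if t = 0 then (1:ℝ) else 0)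
        - (if t = i then (-1:ℝ)^i * q^(i.choose 2) else 0) := by
  rcases eq_or_lt_of_le h with rfl | hlt
  · rw [if_pos rfl]
    have := I1 hq t
    rw [Finset.sum_range_succ] at this
    rw [gbinom_diag hq t] at this
    have h2 : ∑ s ∈ Finset.range t, (-1:ℝ)^s * q^(s.choose 2) * gbinom q t s
        = (if t = 0 then (1:ℝ) else 0) - (-1:ℝ)^t * q^(t.choose 2) := by
      linarith [this]
    rw [h2]
  · rw [if_neg (show ¬ t = i from by omega), sub_zero, ← I1 hq t]
    symm
    apply Finset.sum_subset
    · intro s hs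
      rw [Finset.mem_range] at *
      omega
    · intro s _ hs
      rw [Finset.mem_range, not_lt] at hs
      rw [gbinom_eq_zero hq t s (by omega)]
      ring

end GbAux

namespace CountAux

open Finset Module Submodule GbAux

open Classical in
lemma double_count {α : Type*} [Fintype α] (P : α → Prop) (Q : α → α → Prop) (g : α → ℝ) :
    ∑ w ∈ Finset.univ.filter P, ∑ z ∈ Finset.univ.filter (Q w), g z
      = ∑ z, ((Finset.univ.filter fun w => P w ∧ Q w z).card : ℝ) * g z := by
  have h1 : ∀ w, ∑ z ∈ Finset.univ.filter (Q w), g z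
      = ∑ z, if Q w z then g z else 0 := fun w => (Finset.sum_filter _ _)
  rw [Finset.sum_congr rfl (fun w _ => h1 w), Finset.sum_filter]
  have h2 : ∀ w, (if P w then (∑ z, if Q w z then g z else 0) else 0)
      = ∑ z, if P w ∧ Q w z then g z else 0 := by
    intro w
    by_cases hP : P w
    · simp [hP]
    · simp [hP]
  rw [Finset.sum_congr rfl (fun w _ => h2 w), Finset.sum_comm]
  refine Finset.sum_congr rfl fun z _ => ?_
  rw [← Finset.sum_filter, Finset.sum_const, nsmul_eq_mul]

variable {K V : Type*} [Field K] [Fintype K] [AddCommGroup V] [Module K V]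
  [FiniteDimensional K V] [Fintype (Submodule K V)]

lemma one_lt_q : (1:ℝ) < Fintype.card K := by exact_mod_cast Fintype.one_lt_card

open Classical in
lemma card_mem_not_mem [Fintype V] {A B : Submodule K V} (h : B ≤ A) :
    (((Finset.univ.filter fun v : V => v ∈ A ∧ v ∉ B)).card : ℝ)
      = (Fintype.card K : ℝ) ^ finrank K A - (Fintype.card K : ℝ) ^ finrank K B := by
  have key : ∀ C : Submodule K V,
      ((Finset.univ.filter fun v : V => v ∈ C)).card = Fintype.card K ^ finrank K C := by
    intro C
    have h1 : ((Finset.univ.filter fun v : V => v ∈ C)).card = Fintype.card {v : V // v ∈ C} :=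
      (Fintype.card_subtype _).symm
    have h2 : Fintype.card {v : V // v ∈ C} = Nat.card {v : V // v ∈ C} :=
      (Nat.card_eq_fintype_card).symm
    have h3 : Nat.card ↥C = Fintype.card ↥C := Nat.card_eq_fintype_card
    have h4 : Fintype.card ↥C = Fintype.card K ^ finrank K C := card_eq_pow_finrank
    exact h1.trans (h2.trans (h3.trans h4))
  have hsub : (Finset.univ.filter fun v : V => v ∈ B) ⊆ (Finset.univ.filter fun v : V => v ∈ A) := by
    intro v hv
    rw [Finset.mem_filter] at *
    exact ⟨hv.1, h hv.2⟩
  have hsd : (Finset.univ.filter fun v : V => v ∈ A ∧ v ∉ B)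
      = (Finset.univ.filter fun v : V => v ∈ A) \ (Finset.univ.filter fun v : V => v ∈ B) := by
    ext v
    simp only [Finset.mem_filter, Finset.mem_sdiff, Finset.mem_univ, true_and]

  rw [hsd, Finset.card_sdiff_of_subset hsub, Nat.cast_sub (Finset.card_le_card hsub), key, key]
  push_cast
  ring

lemma inf_span_eq_bot {z : Submodule K V} {v : V} (hv : v ∉ z) : z ⊓ (K ∙ v) = ⊥ := by
  rw [eq_bot_iff]
  rintro u hu
  obtain ⟨huz, huv⟩ := Submodule.mem_inf.mp hu
  obtain ⟨c, rfl⟩ := Submodule.mem_span_singleton.mp huv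
  by_cases hc : c = 0
  · simp [hc]
  · exact absurd (by simpa [inv_smul_smul₀ hc] using Submodule.smul_mem z c⁻¹ huz) hv

lemma finrank_sup_span {z : Submodule K V} {v : V} (hv : v ∉ z) :
    finrank K ↥(z ⊔ (K ∙ v)) = finrank K z + 1 := by
  have hv0 : v ≠ 0 := fun h => hv (h ▸ zero_mem z)
  have h1 := Submodule.finrank_sup_add_finrank_inf_eq z (K ∙ v)
  rw [inf_span_eq_bot hv, finrank_bot, finrank_span_singleton hv0] at h1
  omega

lemma sup_span_inf_eq_bot {x z : Submodule K V} {v : V} (hxz : x ⊓ z = ⊥) (hv : v ∉ x ⊔ z) :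
    (z ⊔ (K ∙ v)) ⊓ x = ⊥ := by
  rw [eq_bot_iff]
  rintro u hu
  obtain ⟨h1, h2⟩ := Submodule.mem_inf.mp hu
  obtain ⟨w, hw, s, hs, rfl⟩ := Submodule.mem_sup.mp h1
  obtain ⟨c, rfl⟩ := Submodule.mem_span_singleton.mp hs
  by_cases hc : c = 0
  · have hwx : w ∈ x ⊓ z := ⟨by simpa [hc] using h2, hw⟩
    rw [hxz] at hwx
    have := (Submodule.mem_bot K).mp hwx
    simp [this, hc]
  · exfalso
    apply hv
    have h3 : (w + c • v) - w ∈ x ⊔ z :=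
      sub_mem (Submodule.mem_sup_left h2) (Submodule.mem_sup_right hw)
    have h4 : c • v ∈ x ⊔ z := by simpa using h3
    have h5 : c⁻¹ • (c • v) ∈ x ⊔ z := Submodule.smul_mem _ _ h4
    rwa [inv_smul_smul₀ hc] at h5

lemma inf_sup_cancel' {x z y : Submodule K V} (hxy : x ⊓ y = ⊥) (hzy : z ≤ y) :
    (x ⊔ z) ⊓ y = z := by
  apply le_antisymm
  · rintro u hu
    obtain ⟨h1, h2⟩ := Submodule.mem_inf.mp hu
    obtain ⟨ξ, hξ, w, hw, rfl⟩ := Submodule.mem_sup.mp h1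
    have hξy : ξ ∈ y := by
      have := sub_mem h2 (hzy hw)
      simpa using this
    have : ξ ∈ x ⊓ y := ⟨hξ, hξy⟩
    rw [hxy] at this
    have h0 := (Submodule.mem_bot K).mp this
    rw [h0, zero_add]
    exact hw
  · exact le_inf le_sup_right hzy

open Classical in
lemma onestep [Fintype V] {A x z : Submodule K V} (hxA : x ≤ A) (hzA : z ≤ A)
    (hxz : x ⊓ z = ⊥) :
    (((Finset.univ.filter fun y : Submodule K V =>
        z ≤ y ∧ y ≤ A ∧ y ⊓ x = ⊥ ∧ finrank K y = finrank K z + 1)).card : ℝ)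
      * ((Fintype.card K : ℝ) ^ (finrank K z + 1) - (Fintype.card K : ℝ) ^ (finrank K z))
      = (Fintype.card K : ℝ) ^ finrank K A
        - (Fintype.card K : ℝ) ^ (finrank K x + finrank K z) := by
  set T := (Finset.univ.filter fun y : Submodule K V =>
        z ≤ y ∧ y ≤ A ∧ y ⊓ x = ⊥ ∧ finrank K y = finrank K z + 1) with hT
  set D := (Finset.univ.filter fun v : V => v ∈ A ∧ v ∉ x ⊔ z) with hD
  have hmap : ∀ v ∈ D, (z ⊔ (K ∙ v)) ∈ T := by
    intro v hv
    rw [hD, Finset.mem_filter] at hv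
    obtain ⟨-, hvA, hvs⟩ := hv
    have hvz : v ∉ z := fun h => hvs (Submodule.mem_sup_right h)
    rw [hT, Finset.mem_filter]
    refine ⟨Finset.mem_univ _, le_sup_left, ?_, ?_, finrank_sup_span hvz⟩
    · exact sup_le hzA ((Submodule.span_singleton_le_iff_mem v A).mpr hvA)
    · exact sup_span_inf_eq_bot hxz hvs
  have hcard := Finset.card_eq_sum_card_fiberwise hmap
  have hfib : ∀ y ∈ T, (D.filter fun v => z ⊔ (K ∙ v) = y)
      = (Finset.univ.filter fun v : V => v ∈ y ∧ v ∉ z) := by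
    intro y hy
    rw [hT, Finset.mem_filter] at hy
    obtain ⟨-, hzy, hyA, hyx, hr⟩ := hy
    ext v
    rw [hD]
    simp only [Finset.mem_filter, Finset.mem_univ, true_and]
    constructor
    · rintro ⟨⟨hvA, hvs⟩, rfl⟩
      exact ⟨Submodule.mem_sup_right (Submodule.mem_span_singleton_self v),
        fun h => hvs (Submodule.mem_sup_right h)⟩
    · rintro ⟨hvy, hvz⟩
      have hvs : v ∉ x ⊔ z := by
        intro h
        have : v ∈ (x ⊔ z) ⊓ y := ⟨h, hvy⟩
        rw [inf_sup_cancel' (by rw [inf_comm]; exact hyx) hzy] at this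
        exact hvz this
      refine ⟨⟨hyA hvy, hvs⟩, ?_⟩
      apply Submodule.eq_of_le_of_finrank_le
      · exact sup_le hzy ((Submodule.span_singleton_le_iff_mem v y).mpr hvy)
      · rw [hr, finrank_sup_span hvz]
  have hDcard : ((D.card : ℕ) : ℝ)
      = (Fintype.card K : ℝ) ^ finrank K A
        - (Fintype.card K : ℝ) ^ (finrank K x + finrank K z) := by
    have hsupA : x ⊔ z ≤ A := sup_le hxA hzA
    have hrk : finrank K ↥(x ⊔ z) = finrank K x + finrank K z := by
      have h1 := Submodule.finrank_sup_add_finrank_inf_eq x z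
      rw [hxz, finrank_bot] at h1
      omega
    rw [hD, card_mem_not_mem hsupA, hrk]
  have h6 : ∀ y ∈ T, ((#(D.filter fun v => z ⊔ (K ∙ v) = y) : ℕ) : ℝ)
      = (Fintype.card K:ℝ)^(finrank K z + 1) - (Fintype.card K:ℝ)^(finrank K z) := by
    intro y hy
    rw [hfib y hy]
    rw [hT, Finset.mem_filter] at hy
    rw [card_mem_not_mem hy.2.1, hy.2.2.2.2]
  have h5 : ((#D : ℕ) : ℝ) = (#T : ℝ)
      * ((Fintype.card K:ℝ)^(finrank K z + 1) - (Fintype.card K:ℝ)^(finrank K z)) := by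
    rw [hcard]
    push_cast
    rw [Finset.sum_congr rfl h6, Finset.sum_const, nsmul_eq_mul]
  rw [← h5]
  exact hDcard

end CountAux

namespace CountAux2
open Finset Module Submodule GbAux CountAux

variable {K V : Type*} [Field K] [Fintype K] [AddCommGroup V] [Module K V]
  [FiniteDimensional K V] [Fintype (Submodule K V)]

open Classical in
lemma countExt [Fintype V] (m : ℕ) :
    ∀ (A x z : Submodule K V), x ≤ A → z ≤ A → x ⊓ z = ⊥ →
    (((Finset.univ.filter fun y : Submodule K V =>
        z ≤ y ∧ y ≤ A ∧ y ⊓ x = ⊥ ∧ finrank K y = finrank K z + m)).card : ℝ)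
      = (Fintype.card K : ℝ) ^ (finrank K x * m)
        * gbinom (Fintype.card K) ((finrank K A : ℤ) - finrank K x - finrank K z) (m : ℤ) := by
  have hq : (1:ℝ) < Fintype.card K := one_lt_q
  induction m with
  | zero =>
    intro A x z hxA hzA hxz
    have hle : finrank K x + finrank K z ≤ finrank K A := by
      have h1 := Submodule.finrank_sup_add_finrank_inf_eq x z
      rw [hxz, finrank_bot] at h1
      have h2 : finrank K ↥(x ⊔ z) ≤ finrank K A := Submodule.finrank_mono (sup_le hxA hzA)
      omega
    have hfil : (Finset.univ.filter fun y : Submodule K V =>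
        z ≤ y ∧ y ≤ A ∧ y ⊓ x = ⊥ ∧ finrank K y = finrank K z + 0) = {z} := by
      ext y
      simp only [Finset.mem_filter, Finset.mem_univ, true_and, Finset.mem_singleton]
      constructor
      · rintro ⟨h1, -, -, h4⟩
        exact (Submodule.eq_of_le_of_finrank_le h1 (by omega)).symm
      · rintro rfl
        exact ⟨le_rfl, hzA, by rw [inf_comm]; exact hxz, by omega⟩
    rw [hfil]
    simp only [Finset.card_singleton, Nat.cast_one, Nat.mul_zero, pow_zero, Nat.cast_zero,
      one_mul]
    rw [gbinom_zero_right' _ (by omega)]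
  | succ m IH =>
    intro A x z hxA hzA hxz
    have hle : finrank K x + finrank K z ≤ finrank K A := by
      have h1 := Submodule.finrank_sup_add_finrank_inf_eq x z
      rw [hxz, finrank_bot] at h1
      have h2 : finrank K ↥(x ⊔ z) ≤ finrank K A := Submodule.finrank_mono (sup_le hxA hzA)
      omega
    set q : ℝ := (Fintype.card K : ℝ) with hqdef
    set a := finrank K A with ha
    set k := finrank K x with hk
    set i := finrank K z with hi
    set P : Submodule K V → Prop :=
      fun y => z ≤ y ∧ y ≤ A ∧ y ⊓ x = ⊥ ∧ finrank K y = finrank K z + (m+1) with hP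
    set R : Submodule K V → Submodule K V → Prop :=
      fun y y' => z ≤ y' ∧ y' ≤ y ∧ finrank K y' = finrank K z + m with hR
    -- Evaluation 1 : inner counts via IH
    have hinner : ∀ y, P y →
        ((Finset.univ.filter (R y)).card : ℝ) = gbinom q ((m+1 : ℕ) : ℤ) ((m : ℕ) : ℤ) := by
      intro y hy
      obtain ⟨hzy, hyA, hyx, hyr⟩ := hy
      have hcongr : (Finset.univ.filter (R y))
          = (Finset.univ.filter fun y' : Submodule K V =>
              z ≤ y' ∧ y' ≤ y ∧ y' ⊓ (⊥ : Submodule K V) = ⊥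
                ∧ finrank K y' = finrank K z + m) := by
        apply Finset.filter_congr
        intro y' _
        simp only [hR, inf_bot_eq]
        tauto
      rw [hcongr, IH y ⊥ z bot_le hzy (by rw [inf_comm, inf_bot_eq]), finrank_bot]
      have h1 : ((finrank K y : ℤ) - (0:ℕ) - (finrank K z : ℤ)) = ((m+1 : ℕ) : ℤ) := by
        omega
      rw [h1]
      simp
    -- N = |filter P| * c1
    have hN1 : ∑ y ∈ Finset.univ.filter P, ∑ y' ∈ Finset.univ.filter (R y), (1:ℝ)
        = ((Finset.univ.filter P).card : ℝ) * gbinom q ((m+1 : ℕ) : ℤ) ((m : ℕ) : ℤ) := by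
      calc ∑ y ∈ Finset.univ.filter P, ∑ y' ∈ Finset.univ.filter (R y), (1:ℝ)
          = ∑ y ∈ Finset.univ.filter P, gbinom q ((m+1 : ℕ) : ℤ) ((m : ℕ) : ℤ) := by
            refine Finset.sum_congr rfl fun y hy => ?_
            rw [Finset.sum_const, nsmul_eq_mul, mul_one]
            exact hinner y (by rw [Finset.mem_filter] at hy; exact hy.2)
        _ = ((Finset.univ.filter P).card : ℝ) * gbinom q ((m+1 : ℕ) : ℤ) ((m : ℕ) : ℤ) := by
            rw [Finset.sum_const, nsmul_eq_mul]
    have hN2a := double_count P R (fun _ => (1:ℝ))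
    simp only [mul_one, Finset.filter_congr_decidable] at hN2a
    have hN2 : (∑ y ∈ Finset.univ.filter P, ∑ y' ∈ Finset.univ.filter (R y), (1:ℝ))
        = ∑ y' : Submodule K V, ((Finset.univ.filter fun y => P y ∧ R y y').card : ℝ) := by
      convert hN2a using 2 <;> congr!
    -- per-y' evaluation via onestep
    have hper : ∀ y' : Submodule K V,
        ((Finset.univ.filter fun y => P y ∧ R y y').card : ℝ)
          * (q^(i+m+1) - q^(i+m))
        = (if z ≤ y' ∧ y' ≤ A ∧ y' ⊓ x = ⊥ ∧ finrank K y' = finrank K z + m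
            then (q^a - q^(k+(i+m))) else 0) := by
      intro y'
      by_cases hQ : z ≤ y' ∧ y' ≤ A ∧ y' ⊓ x = ⊥ ∧ finrank K y' = finrank K z + m
      · rw [if_pos hQ]
        obtain ⟨h1, h2, h3, h4⟩ := hQ
        have hcongr : (Finset.univ.filter fun y => P y ∧ R y y')
            = (Finset.univ.filter fun y =>
                y' ≤ y ∧ y ≤ A ∧ y ⊓ x = ⊥ ∧ finrank K y = finrank K z + m + 1) := by
          apply Finset.filter_congr
          intro y _
          simp only [hP, hR]
          constructor
          · rintro ⟨⟨-, hyA, hyx, hyr⟩, -, hy'y, -⟩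
            exact ⟨hy'y, hyA, hyx, by omega⟩
          · rintro ⟨hy'y, hyA, hyx, hyr⟩
            exact ⟨⟨le_trans h1 hy'y, hyA, hyx, by omega⟩, h1, hy'y, h4⟩
        have hos := onestep (A := A) (x := x) (z := y') hxA h2 (by rw [inf_comm]; exact h3)
        rw [h4] at hos
        rw [hcongr]
        exact hos
      · rw [if_neg hQ]
        have hempty : (Finset.univ.filter fun y => P y ∧ R y y') = ∅ := by
          rw [Finset.filter_eq_empty_iff]
          rintro y -
          rintro ⟨⟨hzy, hyA, hyx, hyr⟩, hzy', hy'y, hry'⟩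
          refine hQ ⟨hzy', le_trans hy'y hyA, ?_, hry'⟩
          rw [← le_bot_iff]
          calc y' ⊓ x ≤ y ⊓ x := inf_le_inf_right x hy'y
          _ = ⊥ := hyx
        rw [hempty]
        simp
    -- the master equation
    have hstep : ((Finset.univ.filter P).card : ℝ)
          * (gbinom q ((m+1 : ℕ) : ℤ) ((m : ℕ) : ℤ) * (q^(i+m+1) - q^(i+m)))
        = ((Finset.univ.filter fun y' : Submodule K V =>
            z ≤ y' ∧ y' ≤ A ∧ y' ⊓ x = ⊥ ∧ finrank K y' = finrank K z + m).card : ℝ)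
          * (q^a - q^(k+(i+m))) := by
      rw [← mul_assoc, ← hN1, hN2, Finset.sum_mul,
        Finset.sum_congr rfl (fun y' _ => hper y'), ← Finset.sum_filter,
        Finset.sum_const, nsmul_eq_mul]
    rw [IH A x z hxA hzA hxz] at hstep
    -- final algebra
    have hfac : gbinom q ((m+1 : ℕ) : ℤ) ((m : ℕ) : ℤ) * (q^(i+m+1) - q^(i+m)) ≠ 0 := by
      have hpos : (0:ℝ) < gbinom q ((m+1 : ℕ) : ℤ) ((m : ℕ) : ℤ) :=
        gbinom_pos hq (m+1) m (by omega)
      have hlt : q^(i+m) < q^(i+m+1) := pow_lt_pow_right₀ hq (by omega)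
      have : (0:ℝ) < q^(i+m+1) - q^(i+m) := by linarith
      positivity
    apply mul_right_cancel₀ hfac
    rw [hstep]
    have hA' : ((a : ℤ) - k - i) = ((a - k - i : ℕ) : ℤ) := by
      have : k + i ≤ a := by omega
      omega
    rw [hA']
    have hgb := gb_step hq (a - k - i) m
    have hqa : q^a = q^(a-k-i) * q^(k+i) := by
      rw [← pow_add]
      congr 1
      omega
    rw [hqa]
    linear_combination (-(q^(k*m + k + i))) * hgb

end CountAux2

namespace GlueAux

open Finset Module Submodule GbAux CountAux CountAux2

variable {K V : Type*} [Field K] [Fintype K] [AddCommGroup V] [Module K V]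
  [FiniteDimensional K V] [Fintype (Submodule K V)]

open Classical in
lemma Wmat_mulVec_apply (k l : ℕ) (g : Submodule K V → ℝ) (x : Submodule K V) :
    ((Wmat K V (k:ℤ) (l:ℤ)).mulVec g) x
      = if finrank K x = k then
          ∑ y ∈ Finset.univ.filter
            (fun y : Submodule K V => finrank K y = l ∧ finrank K ↥(x ⊓ y) = min k l), g y
        else 0 := by
  have h0 : ((Wmat K V (k:ℤ) (l:ℤ)).mulVec g) x
      = ∑ y, Wmat K V (k:ℤ) (l:ℤ) x y * g y := rfl
  rw [h0]
  by_cases hx : finrank K x = k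
  · rw [if_pos hx, Finset.sum_filter]
    apply Finset.sum_congr rfl
    intro y _
    simp only [Wmat, Matrix.of_apply]
    by_cases hc : finrank K y = l ∧ finrank K ↥(x ⊓ y) = min k l
    · rw [if_pos hc, if_pos ⟨by exact_mod_cast hx, by exact_mod_cast hc.1, by
        rw [hc.2]; exact Nat.cast_min k l⟩, one_mul]
    · rw [if_neg (fun hcond => hc ⟨by exact_mod_cast hcond.2.1, by
        have h3 := hcond.2.2
        have h4 : ((min k l : ℕ) : ℤ) = min (k : ℤ) (l : ℤ) := Nat.cast_min k l
        rw [← h4] at h3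
        exact_mod_cast h3⟩), if_neg hc, zero_mul]
  · rw [if_neg hx]
    apply Finset.sum_eq_zero
    intro y _
    simp only [Wmat, Matrix.of_apply]
    rw [if_neg (fun hcond => hx (by exact_mod_cast hcond.1)), zero_mul]

open Classical in
lemma Wbarmat_mulVec_apply (k l : ℕ) (g : Submodule K V → ℝ) (x : Submodule K V) :
    ((Wbarmat K V (k:ℤ) (l:ℤ)).mulVec g) x
      = if finrank K x = k then
          ∑ y ∈ Finset.univ.filter
            (fun y : Submodule K V => finrank K y = l ∧ x ⊓ y = ⊥), g y
        else 0 := by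
  have h0 : ((Wbarmat K V (k:ℤ) (l:ℤ)).mulVec g) x
      = ∑ y, Wbarmat K V (k:ℤ) (l:ℤ) x y * g y := rfl
  rw [h0]
  by_cases hx : finrank K x = k
  · rw [if_pos hx, Finset.sum_filter]
    apply Finset.sum_congr rfl
    intro y _
    simp only [Wbarmat, Matrix.of_apply]
    by_cases hc : finrank K y = l ∧ x ⊓ y = ⊥
    · rw [if_pos hc, if_pos ⟨by exact_mod_cast hx, by exact_mod_cast hc.1, hc.2⟩, one_mul]
    · rw [if_neg (fun hcond => hc ⟨by exact_mod_cast hcond.2.1, hcond.2.2⟩), if_neg hc, zero_mul]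
  · rw [if_neg hx]
    apply Finset.sum_eq_zero
    intro y _
    simp only [Wbarmat, Matrix.of_apply]
    rw [if_neg (fun hcond => hx (by exact_mod_cast hcond.1)), zero_mul]

end GlueAux

/-- For `0 ≤ i ≤ ⌊n/2⌋`, `0 ≤ k, ℓ ≤ n` and `u ∈ U_i`:
`W̄_{k,ℓ} W_{ℓ,i} u = (-1)^i q^{C(i,2) + k(ℓ-i)} [n-k-i choose ℓ-i]_q W_{k,i} u`. -/
theorem Wbarmat_mulVec_Wmat_mulVec
    {K V : Type*} [Field K] [Fintype K] [AddCommGroup V] [Module K V] [FiniteDimensional K V]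
    [Fintype (Submodule K V)]
    (n i k l : ℕ) (hV : Module.finrank K V = n) (hi : i ≤ n / 2) (hk : k ≤ n) (hl : l ≤ n)
    (u : Submodule K V → ℝ) (hu : u ∈ Usub K V i) :
    (Wbarmat K V k l).mulVec ((Wmat K V l i).mulVec u) =
      ((-1 : ℝ) ^ i * (Fintype.card K : ℝ) ^ ((i.choose 2 : ℤ) + k * ((l : ℤ) - i)) *
        gbinom (Fintype.card K) ((n : ℤ) - k - i) ((l : ℤ) - i)) •
        (Wmat K V k i).mulVec u := by
  classical
  haveI : Finite V := Module.finite_of_finite K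
  haveI : Fintype V := Fintype.ofFinite V
  open Finset Module Submodule GbAux CountAux CountAux2 GlueAux in
  set q : ℝ := (Fintype.card K : ℝ) with hqdef
  have hq : (1:ℝ) < q := one_lt_q
  -- decompose the hypothesis on u
  have hu' := Submodule.mem_inf.mp hu
  have hu1 : Matrix.mulVecLin (Wmat K V ((i:ℤ)-1) (i:ℤ)) u = 0 := hu'.1
  have hu2 : ∀ w : Submodule K V, finrank K w ≠ i → u w = 0 := by
    intro w hw
    have h2 := hu'.2
    simp only [Submodule.mem_iInf] at h2
    exact h2 w hw
  -- Step 1 : lowering operators annihilate u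
  have hB1 : ∀ x : Submodule K V, finrank K x < i →
      ∑ z ∈ Finset.univ.filter (fun z : Submodule K V => finrank K z = i ∧ x ≤ z), u z = 0 := by
    intro x hx
    have hrow : ∀ w : Submodule K V, finrank K w = i - 1 →
        ∑ z ∈ Finset.univ.filter (fun z : Submodule K V => finrank K z = i ∧ w ≤ z), u z = 0 := by
      intro w hw
      have h0 : (Wmat K V ((i:ℤ)-1) (i:ℤ)).mulVec u w = 0 := by
        rw [← Matrix.mulVecLin_apply, hu1]; rfl
      have h1 : ∑ z, Wmat K V ((i:ℤ)-1) (i:ℤ) w z * u z = 0 := h0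
      have hterm : ∀ z : Submodule K V, Wmat K V ((i:ℤ)-1) (i:ℤ) w z * u z
          = (if finrank K z = i ∧ w ≤ z then u z else 0) := by
        intro z
        simp only [Wmat, Matrix.of_apply]
        by_cases hc : finrank K z = i ∧ w ≤ z
        · rw [if_pos hc, if_pos ⟨by omega, by exact_mod_cast hc.1, by
            rw [inf_eq_left.mpr hc.2]; omega⟩, one_mul]
        · have hnc : ¬((finrank K ↥w : ℤ) = (i:ℤ)-1 ∧ (finrank K ↥z : ℤ) = (i:ℤ)
              ∧ (finrank K ↥(w ⊓ z) : ℤ) = min ((i:ℤ)-1) (i:ℤ)) := by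
            rintro ⟨c1, c2, c3⟩
            apply hc
            have hz : finrank K z = i := by exact_mod_cast c2
            refine ⟨hz, ?_⟩
            have h4 : finrank K w ≤ finrank K ↥(w ⊓ z) := by omega
            have h5 : w ⊓ z = w := Submodule.eq_of_le_of_finrank_le inf_le_left h4
            exact inf_eq_left.mp h5
          rw [if_neg hnc, if_neg hc, zero_mul]
      rw [Finset.sum_filter]
      exact (Finset.sum_congr rfl (fun z _ => (hterm z).symm)).trans h1
    have hcnt : ∀ z : Submodule K V, finrank K z = i → x ≤ z →
        ((Finset.univ.filter fun w : Submodule K V =>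
            (finrank K w = i-1 ∧ x ≤ w) ∧ (finrank K z = i ∧ w ≤ z)).card : ℝ)
          = gbinom q ((i - finrank K x : ℕ) : ℤ) ((i - 1 - finrank K x : ℕ) : ℤ) := by
      intro z hz hxz
      have hcongr : (Finset.univ.filter fun w : Submodule K V =>
            (finrank K w = i-1 ∧ x ≤ w) ∧ (finrank K z = i ∧ w ≤ z))
          = (Finset.univ.filter fun w : Submodule K V =>
            x ≤ w ∧ w ≤ z ∧ w ⊓ (⊥ : Submodule K V) = ⊥
              ∧ finrank K w = finrank K x + (i - 1 - finrank K x)) := by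
        apply Finset.filter_congr
        intro w _
        constructor
        · rintro ⟨⟨hw1, hw2⟩, -, hw3⟩
          exact ⟨hw2, hw3, by simp, by omega⟩
        · rintro ⟨hxw, hwz, -, hwr⟩
          exact ⟨⟨by omega, hxw⟩, hz, hwz⟩
      rw [hcongr, countExt (i - 1 - finrank K x) z ⊥ x bot_le hxz (bot_inf_eq x), finrank_bot]
      have hc1 : ((finrank K z : ℤ) - ((0:ℕ) : ℤ) - (finrank K x : ℤ))
          = ((i - finrank K x : ℕ) : ℤ) := by omega
      rw [hc1]
      simp [hqdef]
    have hKey' : (∑ w ∈ Finset.univ.filter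
          (fun w : Submodule K V => finrank K w = i-1 ∧ x ≤ w),
          ∑ z ∈ Finset.univ.filter (fun z : Submodule K V => finrank K z = i ∧ w ≤ z), u z)
        = ∑ z : Submodule K V, ((Finset.univ.filter fun w : Submodule K V =>
            (finrank K w = i-1 ∧ x ≤ w) ∧ (finrank K z = i ∧ w ≤ z)).card : ℝ) * u z := by
      convert double_count (fun w : Submodule K V => finrank K w = i-1 ∧ x ≤ w)
        (fun w z => finrank K z = i ∧ w ≤ z) u using 2 <;> congr!
    have hL : (∑ w ∈ Finset.univ.filter
          (fun w : Submodule K V => finrank K w = i-1 ∧ x ≤ w),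
          ∑ z ∈ Finset.univ.filter (fun z : Submodule K V => finrank K z = i ∧ w ≤ z), u z)
        = 0 := by
      apply Finset.sum_eq_zero
      intro w hw
      rw [Finset.mem_filter] at hw
      exact hrow w hw.2.1
    have h0 := hKey'.symm.trans hL
    have hz : ∀ z : Submodule K V, ((Finset.univ.filter fun w : Submodule K V =>
          (finrank K w = i-1 ∧ x ≤ w) ∧ (finrank K z = i ∧ w ≤ z)).card : ℝ) * u z
        = (if finrank K z = i ∧ x ≤ z then
            gbinom q ((i - finrank K x : ℕ) : ℤ) ((i - 1 - finrank K x : ℕ) : ℤ) * u z else 0) := by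
      intro z
      by_cases h1 : finrank K z = i
      · by_cases h2 : x ≤ z
        · rw [if_pos ⟨h1, h2⟩, hcnt z h1 h2]
        · rw [if_neg (by tauto)]
          have hemp : (Finset.univ.filter fun w : Submodule K V =>
              (finrank K w = i-1 ∧ x ≤ w) ∧ (finrank K z = i ∧ w ≤ z)) = ∅ := by
            rw [Finset.filter_eq_empty_iff]
            rintro w - ⟨⟨-, hxw⟩, -, hwz⟩
            exact h2 (le_trans hxw hwz)
          rw [hemp]
          simp
      · rw [if_neg (by tauto), hu2 z h1, mul_zero]
    have h3 : (0:ℝ) = gbinom q ((i - finrank K x : ℕ) : ℤ) ((i - 1 - finrank K x : ℕ) : ℤ)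
        * ∑ z ∈ Finset.univ.filter (fun z : Submodule K V => finrank K z = i ∧ x ≤ z), u z := by
      calc (0:ℝ) = ∑ z : Submodule K V, ((Finset.univ.filter fun w : Submodule K V =>
            (finrank K w = i-1 ∧ x ≤ w) ∧ (finrank K z = i ∧ w ≤ z)).card : ℝ) * u z := h0.symm
        _ = ∑ z : Submodule K V, (if finrank K z = i ∧ x ≤ z then
            gbinom q ((i - finrank K x : ℕ) : ℤ) ((i - 1 - finrank K x : ℕ) : ℤ) * u z else 0) :=
          Finset.sum_congr rfl (fun z _ => hz z)
        _ = ∑ z ∈ Finset.univ.filter (fun z : Submodule K V => finrank K z = i ∧ x ≤ z),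
            gbinom q ((i - finrank K x : ℕ) : ℤ) ((i - 1 - finrank K x : ℕ) : ℤ) * u z :=
          (Finset.sum_filter _ _).symm
        _ = gbinom q ((i - finrank K x : ℕ) : ℤ) ((i - 1 - finrank K x : ℕ) : ℤ)
            * ∑ z ∈ Finset.univ.filter (fun z : Submodule K V => finrank K z = i ∧ x ≤ z), u z :=
          (Finset.mul_sum _ _ _).symm
    have hcpos : (0:ℝ) < gbinom q ((i - finrank K x : ℕ) : ℤ) ((i - 1 - finrank K x : ℕ) : ℤ) :=
      gbinom_pos hq _ _ (by omega)
    rcases mul_eq_zero.mp h3.symm with h | h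
    · exact absurd h (ne_of_gt hcpos)
    · exact h
  -- Step 2 : the key claim
  have hclaim : ∀ x : Submodule K V,
      ∑ z ∈ Finset.univ.filter (fun z : Submodule K V => finrank K z = i ∧ x ⊓ z = ⊥), u z
        = (-1:ℝ)^i * q^(i.choose 2)
          * ∑ z ∈ Finset.univ.filter (fun z : Submodule K V => finrank K z = i ∧ z ≤ x), u z := by
    intro x
    have hcnt2 : ∀ (s : ℕ) (z : Submodule K V), finrank K z = i →
        ((Finset.univ.filter fun w : Submodule K V =>
            (finrank K w = s ∧ w ≤ x) ∧ (finrank K z = i ∧ w ≤ z)).card : ℝ)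
          = gbinom q ((finrank K ↥(x ⊓ z) : ℕ) : ℤ) (s : ℤ) := by
      intro s z hz
      have hcongr : (Finset.univ.filter fun w : Submodule K V =>
            (finrank K w = s ∧ w ≤ x) ∧ (finrank K z = i ∧ w ≤ z))
          = (Finset.univ.filter fun w : Submodule K V =>
            (⊥ : Submodule K V) ≤ w ∧ w ≤ x ⊓ z ∧ w ⊓ (⊥ : Submodule K V) = ⊥
              ∧ finrank K w = finrank K (⊥ : Submodule K V) + s) := by
        apply Finset.filter_congr
        intro w _
        rw [finrank_bot]
        constructor
        · rintro ⟨⟨hw1, hw2⟩, -, hw3⟩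
          exact ⟨bot_le, le_inf hw2 hw3, by simp, by omega⟩
        · rintro ⟨-, hwz, -, hwr⟩
          exact ⟨⟨by omega, (le_inf_iff.mp hwz).1⟩, hz, (le_inf_iff.mp hwz).2⟩
      rw [hcongr, countExt s (x ⊓ z) ⊥ ⊥ bot_le bot_le (bot_inf_eq ⊥), finrank_bot]
      have hc1 : ((finrank K ↥(x ⊓ z) : ℤ) - ((0:ℕ) : ℤ) - ((0:ℕ) : ℤ))
          = ((finrank K ↥(x ⊓ z) : ℕ) : ℤ) := by omega
      rw [hc1]
      simp [hqdef]
    have hrel : ∀ s : ℕ, s < i →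
        (∑ z : Submodule K V, ((Finset.univ.filter fun w : Submodule K V =>
            (finrank K w = s ∧ w ≤ x) ∧ (finrank K z = i ∧ w ≤ z)).card : ℝ) * u z) = 0 := by
      intro s hs
      have hdc : (∑ w ∈ Finset.univ.filter
            (fun w : Submodule K V => finrank K w = s ∧ w ≤ x),
            ∑ z ∈ Finset.univ.filter (fun z : Submodule K V => finrank K z = i ∧ w ≤ z), u z)
          = ∑ z : Submodule K V, ((Finset.univ.filter fun w : Submodule K V =>
              (finrank K w = s ∧ w ≤ x) ∧ (finrank K z = i ∧ w ≤ z)).card : ℝ) * u z := by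
        convert double_count (fun w : Submodule K V => finrank K w = s ∧ w ≤ x)
          (fun w z => finrank K z = i ∧ w ≤ z) u using 2 <;> congr!
      rw [← hdc]
      apply Finset.sum_eq_zero
      intro w hw
      rw [Finset.mem_filter] at hw
      exact hB1 w (by omega)
    have h0 : ∑ s ∈ Finset.range i, (-1:ℝ)^s * q^(s.choose 2)
        * (∑ z : Submodule K V, ((Finset.univ.filter fun w : Submodule K V =>
            (finrank K w = s ∧ w ≤ x) ∧ (finrank K z = i ∧ w ≤ z)).card : ℝ) * u z) = 0 := by
      apply Finset.sum_eq_zero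
      intro s hs
      rw [hrel s (Finset.mem_range.mp hs), mul_zero]
    have hswap : ∑ s ∈ Finset.range i, (-1:ℝ)^s * q^(s.choose 2)
        * (∑ z : Submodule K V, ((Finset.univ.filter fun w : Submodule K V =>
            (finrank K w = s ∧ w ≤ x) ∧ (finrank K z = i ∧ w ≤ z)).card : ℝ) * u z)
        = ∑ z : Submodule K V, (∑ s ∈ Finset.range i, (-1:ℝ)^s * q^(s.choose 2)
          * ((Finset.univ.filter fun w : Submodule K V =>
            (finrank K w = s ∧ w ≤ x) ∧ (finrank K z = i ∧ w ≤ z)).card : ℝ)) * u z := by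
      calc _ = ∑ s ∈ Finset.range i, ∑ z : Submodule K V, (-1:ℝ)^s * q^(s.choose 2)
            * (((Finset.univ.filter fun w : Submodule K V =>
              (finrank K w = s ∧ w ≤ x) ∧ (finrank K z = i ∧ w ≤ z)).card : ℝ) * u z) := by
            exact Finset.sum_congr rfl fun s _ => Finset.mul_sum _ _ _
        _ = ∑ z : Submodule K V, ∑ s ∈ Finset.range i, (-1:ℝ)^s * q^(s.choose 2)
            * (((Finset.univ.filter fun w : Submodule K V =>
              (finrank K w = s ∧ w ≤ x) ∧ (finrank K z = i ∧ w ≤ z)).card : ℝ) * u z) :=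
            Finset.sum_comm
        _ = _ := by
            refine Finset.sum_congr rfl fun z _ => ?_
            rw [Finset.sum_mul]
            exact Finset.sum_congr rfl fun s _ => (mul_assoc _ _ _).symm
    have hcoeff : ∀ z : Submodule K V, (∑ s ∈ Finset.range i, (-1:ℝ)^s * q^(s.choose 2)
          * ((Finset.univ.filter fun w : Submodule K V =>
            (finrank K w = s ∧ w ≤ x) ∧ (finrank K z = i ∧ w ≤ z)).card : ℝ)) * u z
        = (if finrank K z = i ∧ x ⊓ z = ⊥ then u z else 0)
          - (if finrank K z = i ∧ z ≤ x then ((-1:ℝ)^i * q^(i.choose 2)) * u z else 0) := by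
      intro z
      by_cases hz : finrank K z = i
      · have ht : finrank K ↥(x ⊓ z) ≤ i := by
          have := Submodule.finrank_mono (inf_le_right : x ⊓ z ≤ z)
          omega
        have hsum2 : (∑ s ∈ Finset.range i, (-1:ℝ)^s * q^(s.choose 2)
            * ((Finset.univ.filter fun w : Submodule K V =>
              (finrank K w = s ∧ w ≤ x) ∧ (finrank K z = i ∧ w ≤ z)).card : ℝ))
            = ∑ s ∈ Finset.range i, (-1:ℝ)^s * q^(s.choose 2)
              * gbinom q ((finrank K ↥(x ⊓ z) : ℕ) : ℤ) (s : ℤ) :=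
          Finset.sum_congr rfl (fun s _ => by rw [hcnt2 s z hz])
        rw [hsum2, I1partial hq i _ ht]
        have hiff1 : (finrank K ↥(x ⊓ z) = 0) ↔ (x ⊓ z = ⊥) := Submodule.finrank_eq_zero
        have hiff2 : (finrank K ↥(x ⊓ z) = i) ↔ (z ≤ x) := by
          constructor
          · intro h
            have h5 : x ⊓ z = z := Submodule.eq_of_le_of_finrank_le inf_le_right (by omega)
            exact inf_eq_right.mp h5
          · intro h
            rw [inf_eq_right.mpr h, hz]
        by_cases h1 : finrank K ↥(x ⊓ z) = 0
        · by_cases h2 : finrank K ↥(x ⊓ z) = i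
          · have hi0 : i = 0 := by omega
            rw [if_pos h1, if_pos h2, if_pos ⟨hz, hiff1.mp h1⟩, if_pos ⟨hz, hiff2.mp h2⟩, hi0]
            simp [Nat.choose]
          · rw [if_pos h1, if_neg h2, if_pos ⟨hz, hiff1.mp h1⟩,
              if_neg (fun hcond => h2 (hiff2.mpr hcond.2))]
            ring
        · by_cases h2 : finrank K ↥(x ⊓ z) = i
          · rw [if_neg h1, if_pos h2, if_neg (fun hcond => h1 (hiff1.mpr hcond.2)),
              if_pos ⟨hz, hiff2.mp h2⟩]
            ring
          · rw [if_neg h1, if_neg h2, if_neg (fun hcond => h1 (hiff1.mpr hcond.2)),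
              if_neg (fun hcond => h2 (hiff2.mpr hcond.2))]
            ring
      · rw [hu2 z hz, mul_zero, if_neg (by tauto), if_neg (by tauto)]
        simp
    have h5 : ∑ z : Submodule K V, ((if finrank K z = i ∧ x ⊓ z = ⊥ then u z else 0)
        - (if finrank K z = i ∧ z ≤ x then ((-1:ℝ)^i * q^(i.choose 2)) * u z else 0)) = 0 := by
      rw [Finset.sum_congr rfl (fun z _ => (hcoeff z).symm), ← hswap]
      exact h0
    rw [Finset.sum_sub_distrib, ← Finset.sum_filter, ← Finset.sum_filter] at h5
    have h6 : ∑ z ∈ Finset.univ.filter (fun z : Submodule K V => finrank K z = i ∧ z ≤ x),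
        ((-1:ℝ)^i * q^(i.choose 2)) * u z
        = ((-1:ℝ)^i * q^(i.choose 2)) * ∑ z ∈ Finset.univ.filter
          (fun z : Submodule K V => finrank K z = i ∧ z ≤ x), u z := (Finset.mul_sum _ _ _).symm
    rw [h6] at h5
    linarith [h5]
  -- Step 3 : final assembly
  funext x
  rw [Pi.smul_apply, smul_eq_mul]
  rw [Wbarmat_mulVec_apply k l, Wmat_mulVec_apply k i]
  by_cases hxk : finrank K x = k
  swap
  · rw [if_neg hxk, if_neg hxk, mul_zero]
  rw [if_pos hxk, if_pos hxk]
  by_cases hli : i ≤ l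
  swap
  · -- case l < i : both sides vanish
    have hz1 : ∀ y ∈ Finset.univ.filter
        (fun y : Submodule K V => finrank K y = l ∧ x ⊓ y = ⊥),
        ((Wmat K V (l:ℤ) (i:ℤ)).mulVec u) y = 0 := by
      intro y hy
      rw [Finset.mem_filter] at hy
      rw [Wmat_mulVec_apply l i, if_pos hy.2.1]
      have hcongr : (Finset.univ.filter
          (fun z : Submodule K V => finrank K z = i ∧ finrank K ↥(y ⊓ z) = min l i))
          = (Finset.univ.filter (fun z : Submodule K V => finrank K z = i ∧ y ≤ z)) := by
        apply Finset.filter_congr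
        intro z _
        have hmin : min l i = l := by omega
        constructor
        · rintro ⟨hz, hyz⟩
          have h4 : finrank K y ≤ finrank K ↥(y ⊓ z) := by omega
          have h5 : y ⊓ z = y := Submodule.eq_of_le_of_finrank_le inf_le_left h4
          exact ⟨hz, inf_eq_left.mp h5⟩
        · rintro ⟨hz, hyz⟩
          refine ⟨hz, ?_⟩
          rw [inf_eq_left.mpr hyz, hy.2.1, hmin]
      rw [hcongr]
      exact hB1 y (by omega)
    rw [Finset.sum_eq_zero hz1]
    have hgb0 : gbinom (Fintype.card K) ((n:ℤ) - k - i) ((l:ℤ) - i) = 0 := by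
      rw [gbinom, if_neg]
      rintro ⟨-, h⟩
      omega
    rw [hgb0]
    ring
  · -- main case : i ≤ l
    have hz1 : ∀ y ∈ Finset.univ.filter
        (fun y : Submodule K V => finrank K y = l ∧ x ⊓ y = ⊥),
        ((Wmat K V (l:ℤ) (i:ℤ)).mulVec u) y
          = ∑ z ∈ Finset.univ.filter (fun z : Submodule K V => finrank K z = i ∧ z ≤ y), u z := by
      intro y hy
      rw [Finset.mem_filter] at hy
      rw [Wmat_mulVec_apply l i, if_pos hy.2.1]
      have hcongr : (Finset.univ.filter
          (fun z : Submodule K V => finrank K z = i ∧ finrank K ↥(y ⊓ z) = min l i))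
          = (Finset.univ.filter (fun z : Submodule K V => finrank K z = i ∧ z ≤ y)) := by
        apply Finset.filter_congr
        intro z _
        have hmin : min l i = i := by omega
        constructor
        · rintro ⟨hz, hyz⟩
          have h4 : finrank K z ≤ finrank K ↥(y ⊓ z) := by omega
          have h5 : y ⊓ z = z := Submodule.eq_of_le_of_finrank_le inf_le_right h4
          exact ⟨hz, inf_eq_right.mp h5⟩
        · rintro ⟨hz, hzy⟩
          refine ⟨hz, ?_⟩
          rw [inf_eq_right.mpr hzy, hz, hmin]
      rw [hcongr]
    rw [Finset.sum_congr rfl hz1]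
    have hdc : (∑ y ∈ Finset.univ.filter
          (fun y : Submodule K V => finrank K y = l ∧ x ⊓ y = ⊥),
          ∑ z ∈ Finset.univ.filter (fun z : Submodule K V => finrank K z = i ∧ z ≤ y), u z)
        = ∑ z : Submodule K V, ((Finset.univ.filter fun y : Submodule K V =>
            (finrank K y = l ∧ x ⊓ y = ⊥) ∧ (finrank K z = i ∧ z ≤ y)).card : ℝ) * u z := by
      convert double_count (fun y : Submodule K V => finrank K y = l ∧ x ⊓ y = ⊥)
        (fun y z => finrank K z = i ∧ z ≤ y) u using 2 <;> congr!
    rw [hdc]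
    have hcard : ∀ z : Submodule K V, finrank K z = i → x ⊓ z = ⊥ →
        ((Finset.univ.filter fun y : Submodule K V =>
            (finrank K y = l ∧ x ⊓ y = ⊥) ∧ (finrank K z = i ∧ z ≤ y)).card : ℝ)
          = q^(k*(l-i)) * gbinom q ((n:ℤ) - k - i) ((l - i : ℕ) : ℤ) := by
      intro z hz hxz
      have hcongr : (Finset.univ.filter fun y : Submodule K V =>
            (finrank K y = l ∧ x ⊓ y = ⊥) ∧ (finrank K z = i ∧ z ≤ y))
          = (Finset.univ.filter fun y : Submodule K V =>
            z ≤ y ∧ y ≤ (⊤ : Submodule K V) ∧ y ⊓ x = ⊥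
              ∧ finrank K y = finrank K z + (l - i)) := by
        apply Finset.filter_congr
        intro y _
        constructor
        · rintro ⟨⟨hyl, hyx⟩, -, hzy⟩
          exact ⟨hzy, le_top, by rw [inf_comm]; exact hyx, by omega⟩
        · rintro ⟨hzy, -, hyx, hyr⟩
          exact ⟨⟨by omega, by rw [inf_comm]; exact hyx⟩, hz, hzy⟩
      rw [hcongr, countExt (l - i) ⊤ x z le_top le_top hxz]
      rw [finrank_top, hV, hxk, hz]
    have hperz : ∀ z : Submodule K V,
        ((Finset.univ.filter fun y : Submodule K V =>
            (finrank K y = l ∧ x ⊓ y = ⊥) ∧ (finrank K z = i ∧ z ≤ y)).card : ℝ) * u z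
          = (if finrank K z = i ∧ x ⊓ z = ⊥ then
              (q^(k*(l-i)) * gbinom q ((n:ℤ) - k - i) ((l - i : ℕ) : ℤ)) * u z else 0) := by
      intro z
      by_cases hz : finrank K z = i
      · by_cases hxz : x ⊓ z = ⊥
        · rw [if_pos ⟨hz, hxz⟩, hcard z hz hxz]
        · rw [if_neg (by tauto)]
          have hemp : (Finset.univ.filter fun y : Submodule K V =>
              (finrank K y = l ∧ x ⊓ y = ⊥) ∧ (finrank K z = i ∧ z ≤ y)) = ∅ := by
            rw [Finset.filter_eq_empty_iff]
            rintro y - ⟨⟨-, hyx⟩, -, hzy⟩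
            apply hxz
            have h7 : x ⊓ z ≤ x ⊓ y := inf_le_inf_left x hzy
            rw [hyx] at h7
            exact le_bot_iff.mp h7
          rw [hemp]
          simp
      · rw [if_neg (by tauto), hu2 z hz, mul_zero]
    rw [Finset.sum_congr rfl (fun z _ => hperz z), ← Finset.sum_filter,
      ← Finset.mul_sum, hclaim x]
    by_cases hki : i ≤ k
    · -- min k i = i
      have hcongr2 : (Finset.univ.filter
          (fun z : Submodule K V => finrank K z = i ∧ finrank K ↥(x ⊓ z) = min k i))
          = (Finset.univ.filter (fun z : Submodule K V => finrank K z = i ∧ z ≤ x)) := by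
        apply Finset.filter_congr
        intro z _
        have hmin : min k i = i := by omega
        constructor
        · rintro ⟨hz, hxz⟩
          have h4 : finrank K z ≤ finrank K ↥(x ⊓ z) := by omega
          have h5 : x ⊓ z = z := Submodule.eq_of_le_of_finrank_le inf_le_right h4
          exact ⟨hz, inf_eq_right.mp h5⟩
        · rintro ⟨hz, hzx⟩
          refine ⟨hz, ?_⟩
          rw [inf_eq_right.mpr hzx, hz, hmin]
      rw [hcongr2]
      have hcast1 : ((l:ℤ) - i) = ((l - i : ℕ) : ℤ) := by omega
      rw [hcast1]
      have hcast2 : ((i.choose 2 : ℤ) + (k:ℤ) * ((l - i : ℕ) : ℤ))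
          = ((i.choose 2 + k * (l-i) : ℕ) : ℤ) := by
        push_cast
        ring
      rw [hcast2, zpow_natCast, pow_add]
      ring
    · -- k < i : both sides vanish
      have hcongr2 : (Finset.univ.filter
          (fun z : Submodule K V => finrank K z = i ∧ finrank K ↥(x ⊓ z) = min k i))
          = (Finset.univ.filter (fun z : Submodule K V => finrank K z = i ∧ x ≤ z)) := by
        apply Finset.filter_congr
        intro z _
        have hmin : min k i = k := by omega
        constructor
        · rintro ⟨hz, hxz⟩
          have h4 : finrank K x ≤ finrank K ↥(x ⊓ z) := by omega
          have h5 : x ⊓ z = x := Submodule.eq_of_le_of_finrank_le inf_le_left h4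
          exact ⟨hz, inf_eq_left.mp h5⟩
        · rintro ⟨hz, hxz⟩
          refine ⟨hz, ?_⟩
          rw [inf_eq_left.mpr hxz, hxk, hmin]
      rw [hcongr2, hB1 x (by omega), mul_zero]
      have hSemp : (Finset.univ.filter
          (fun z : Submodule K V => finrank K z = i ∧ z ≤ x)) = ∅ := by
        rw [Finset.filter_eq_empty_iff]
        rintro z - ⟨hz, hzx⟩
        have := Submodule.finrank_mono hzx
        omega
      rw [hSemp]
      simp
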